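/- Let a, b, c, S > 0, 2 < q < 10/3, let C_q > 0 be a positive parameter, set Λ = bS²/2 + √(aS + b²S⁴/4), and suppose 0 < μ < μ**. Then for every t ≥ 0, (b/12) t⁴ − μ (1/q − δ_q/6) C_q^q c^{q(1−δ_q)} t^{qδ_q} > −( aSΛ/3 + bS²Λ²/12 ). -/

import Mathlib

open Real

/-- for `0 < μ < μ**`, every `t ≥ 0` satisfies
`(b/12) t⁴ − μ (1/q − δ_q/6) C_q^q c^{q(1−δ_q)} t^{qδ_q} > −(aSΛ/3 + bS²Λ²/12)`. -/
theorem stmt_11 (a b c S q μ Cq : ℝ)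
    (ha : 0 < a) (hb : 0 < b) (hc : 0 < c) (hS : 0 < S)
    (hq1 : 2 < q) (hq2 : q < 10/3) (hCq : 0 < Cq)
    (δq : ℝ) (hδq : δq = 3 * (q - 2) / (2 * q))
    (Λ : ℝ) (hΛ : Λ = b * S ^ 2 / 2 + Real.sqrt (a * S + b ^ 2 * S ^ 4 / 4))
    (μss : ℝ)
    (hμss : μss = 2 * (b / δq) ^ (q * δq / 4) / ((6 - q * δq) * Cq ^ q) *
      ((12 * q / (4 - q * δq)) * (a * S * Λ / 3 + b * S ^ 2 * Λ ^ 2 / 12)) ^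
        (1 - q * δq / 4) / c ^ (q * (1 - δq)))
    (hμ0 : 0 < μ) (hμ : μ < μss) :
    ∀ t : ℝ, 0 ≤ t →
      -(a * S * Λ / 3 + b * S ^ 2 * Λ ^ 2 / 12) <
        b / 12 * t ^ 4 - μ * (1 / q - δq / 6) * Cq ^ q * c ^ (q * (1 - δq)) * t ^ (q * δq) := by
  have hq0 : 0 < q := by linarith
  set s : ℝ := 3 * (q - 2) / 2 with hs_def
  clear_value s
  have hs0 : 0 < s := by rw [hs_def]; linarith
  have hs2 : s < 2 := by rw [hs_def]; linarith
  have hs4 : (0:ℝ) < 4 - s := by linarith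
  have hs6 : (0:ℝ) < 6 - s := by linarith
  have hqδ : q * δq = s := by rw [hδq, hs_def]; field_simp
  have hδq0 : 0 < δq := by rw [hδq]; apply div_pos <;> linarith
  have hΛ0 : 0 < Λ := by
    rw [hΛ]
    have : 0 ≤ Real.sqrt (a * S + b ^ 2 * S ^ 4 / 4) := Real.sqrt_nonneg _
    nlinarith [pow_pos hS 2]
  set M : ℝ := a * S * Λ / 3 + b * S ^ 2 * Λ ^ 2 / 12 with hM_def
  clear_value M
  have hM0 : 0 < M := by
    rw [hM_def]
    have h1 : 0 < a * S * Λ / 3 := by positivity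
    have h2 : 0 < b * S ^ 2 * Λ ^ 2 / 12 := by positivity
    linarith
  have hcX0 : 0 < c ^ (q * (1 - δq)) := Real.rpow_pos_of_pos hc _
  have hCqq0 : 0 < Cq ^ q := Real.rpow_pos_of_pos hCq _
  set Kc : ℝ := (1 / q - δq / 6) * Cq ^ q * c ^ (q * (1 - δq)) with hKc_def
  clear_value Kc
  have hKfact : 1 / q - δq / 6 = (6 - s) / (6 * q) := by
    rw [hδq, hs_def]; field_simp
  have hKc0 : 0 < Kc := by
    rw [hKc_def, hKfact]
    exact mul_pos (mul_pos (div_pos hs6 (by linarith)) hCqq0) hcX0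
  set lam : ℝ := b / (3 * s) with hlam_def
  clear_value lam
  have hlam0 : 0 < lam := by rw [hlam_def]; exact div_pos hb (by linarith)
  have hA0 : 0 < μ * Kc := mul_pos hμ0 hKc0
  have hlamr0 : 0 < lam ^ (s / 4) := Real.rpow_pos_of_pos hlam0 _
  have hQ0 : 0 < 4 * M / (4 - s) := div_pos (by linarith) hs4
  set B : ℝ := (μ * Kc / lam ^ (s / 4)) ^ (4 / (4 - s)) with hB_def
  clear_value B
  have hbase0 : 0 < μ * Kc / lam ^ (s / 4) := div_pos hA0 hlamr0
  have hB0 : 0 < B := by rw [hB_def]; exact Real.rpow_pos_of_pos hbase0 _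
  -- Young's inequality step
  have hyoung : ∀ t : ℝ, 0 ≤ t →
      μ * Kc * t ^ s ≤ b / 12 * t ^ 4 + (4 - s) / 4 * B := by
    intro t ht
    have hBpow : B ^ ((4 - s) / 4) = μ * Kc / lam ^ (s / 4) := by
      rw [hB_def, ← Real.rpow_mul hbase0.le]
      have h1 : 4 / (4 - s) * ((4 - s) / 4) = 1 := by field_simp
      rw [h1, Real.rpow_one]
    have h2 : (lam * t ^ 4) ^ (s / 4) = lam ^ (s / 4) * t ^ s := by
      rw [Real.mul_rpow hlam0.le (by positivity)]
      congr 1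
      rw [← Real.rpow_natCast t 4, ← Real.rpow_mul ht]
      congr 1
      push_cast; ring
    have h3 : (lam * t ^ 4) ^ (s / 4) * B ^ ((4 - s) / 4) = μ * Kc * t ^ s := by
      rw [h2, hBpow]
      field_simp
    calc μ * Kc * t ^ s = (lam * t ^ 4) ^ (s / 4) * B ^ ((4 - s) / 4) := h3.symm
      _ ≤ s / 4 * (lam * t ^ 4) + (4 - s) / 4 * B :=
          Real.geom_mean_le_arith_mean2_weighted (by linarith) (by linarith)
            (by positivity) hB0.le (by ring)
      _ = b / 12 * t ^ 4 + (4 - s) / 4 * B := by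
          rw [hlam_def]
          field_simp
          ring
  -- The key identity for μ**
  rw [hqδ] at hμss
  have h1s : 1 - s / 4 = (4 - s) / 4 := by ring
  rw [h1s] at hμss
  have hid : μss * Kc = lam ^ (s / 4) * (4 * M / (4 - s)) ^ ((4 - s) / 4) := by
    have e0 : b / δq = 3 * q * lam := by
      rw [hlam_def, div_eq_iff hδq0.ne']
      field_simp
      linear_combination -hqδ
    have e1 : (b / δq) ^ (s / 4) = (3 * q) ^ (s / 4) * lam ^ (s / 4) := by
      rw [e0, Real.mul_rpow (by positivity) hlam0.le]
    have e2 : (12 * q / (4 - s) * M) ^ ((4 - s) / 4)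
        = (3 * q) ^ ((4 - s) / 4) * (4 * M / (4 - s)) ^ ((4 - s) / 4) := by
      rw [← Real.mul_rpow (by positivity) hQ0.le]
      congr 1
      field_simp
      ring
    have e3 : (3 * q) ^ (s / 4) * (3 * q) ^ ((4 - s) / 4) = 3 * q := by
      rw [← Real.rpow_add (by positivity)]
      have h : s / 4 + (4 - s) / 4 = 1 := by ring
      rw [h, Real.rpow_one]
    rw [hμss, hKc_def, hKfact, e1, e2]
    field_simp [hs6.ne', hCqq0.ne', hcX0.ne', hq0.ne']
    linear_combination 2 * e3
  have hAB : μ * Kc < lam ^ (s / 4) * (4 * M / (4 - s)) ^ ((4 - s) / 4) := by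
    calc μ * Kc < μss * Kc := mul_lt_mul_of_pos_right hμ hKc0
      _ = _ := hid
  have hBM : (4 - s) / 4 * B < M := by
    have hx : μ * Kc / lam ^ (s / 4) < (4 * M / (4 - s)) ^ ((4 - s) / 4) := by
      rw [div_lt_iff₀ hlamr0]
      calc μ * Kc < lam ^ (s / 4) * (4 * M / (4 - s)) ^ ((4 - s) / 4) := hAB
        _ = (4 * M / (4 - s)) ^ ((4 - s) / 4) * lam ^ (s / 4) := by ring
    have h1 : B < 4 * M / (4 - s) := by
      calc B = (μ * Kc / lam ^ (s / 4)) ^ (4 / (4 - s)) := hB_def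
        _ < ((4 * M / (4 - s)) ^ ((4 - s) / 4)) ^ (4 / (4 - s)) :=
            Real.rpow_lt_rpow hbase0.le hx (div_pos (by norm_num) hs4)
        _ = 4 * M / (4 - s) := by
            rw [← Real.rpow_mul hQ0.le]
            have h : (4 - s) / 4 * (4 / (4 - s)) = 1 := by field_simp
            rw [h, Real.rpow_one]
    calc (4 - s) / 4 * B < (4 - s) / 4 * (4 * M / (4 - s)) :=
          mul_lt_mul_of_pos_left h1 (by linarith)
      _ = M := by field_simp
  intro t ht
  have key : μ * (1 / q - δq / 6) * Cq ^ q * c ^ (q * (1 - δq)) * t ^ (q * δq)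
      = μ * Kc * t ^ s := by
    rw [hqδ, hKc_def]; ring
  rw [key]
  have := hyoung t ht
  linarith
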